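/- Let A be a complex Banach space, γ : ℤ → ℝ with γ(n) > 0 for all n, and s ≥ 0. Let (f_k)_{k ∈ ℕ} be a sequence of integrable functions f_k : AddCircle 1 → A, each with the family n ↦ (1 + γ(n)^2)^(s/2) ‖fourierCoeff f_k n‖ summable over ℤ, and suppose the sequence is Cauchy in the spectral Barron norm: for every ε > 0 there exists N such that for all m, k ≥ N, ∑'_{n} (1 + γ(n)^2)^(s/2) ‖fourierCoeff f_m n − fourierCoeff f_k n‖ < ε. Then there exists a continuous function g : AddCircle 1 → A with n ↦ (1 + γ(n)^2)^(s/2) ‖fourierCoeff g n‖ summable, such that ∑'_{n} (1 + γ(n)^2)^(s/2) ‖fourierCoeff f_k n − fourierCoeff g n‖ → 0 as k → ∞. (Torus instance of the completeness of the spectral Barron space 𝔅^s_γ(𝕋, A); the case s = 0 is the base theorem and general s ≥ 0 is the corollary.) -/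

import Mathlib

open MeasureTheory AddCircle Filter

lemma barron_fc_fourier (m n : ℤ) :
    fourierCoeff (⇑(fourier m) : AddCircle (1:ℝ) → ℂ) n = if m = n then 1 else 0 := by
  unfold fourierCoeff
  simp_rw [smul_eq_mul, ← fourier_add]
  split_ifs with h
  · subst h
    simp_rw [neg_add_cancel]
    have h0 : ⇑(fourier 0 : C(AddCircle (1:ℝ), ℂ)) = fun _ => (1:ℂ) := by
      ext1; exact fourier_zero
    rw [h0, integral_const, probReal_univ, one_smul]
  · have hij : -n + m ≠ 0 := fun hc => h (by omega)
    exact integral_eq_zero_of_add_right_eq_neg (μ := haarAddCircle)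
      (fourier_add_half_inv_index hij one_pos)

lemma barron_fc_fourier_smul {A : Type} [NormedAddCommGroup A] [NormedSpace ℂ A]
    [CompleteSpace A] (m n : ℤ) (v : A) :
    fourierCoeff (fun x : AddCircle (1:ℝ) => fourier m x • v) n
      = if m = n then v else 0 := by
  have h : fourierCoeff (fun x : AddCircle (1:ℝ) => fourier m x • v) n
      = (fourierCoeff (⇑(fourier m) : AddCircle (1:ℝ) → ℂ) n) • v := by
    unfold fourierCoeff
    simp_rw [smul_smul]
    rw [integral_smul_const]
    rfl
  rw [h, barron_fc_fourier]
  split_ifs <;> simp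

lemma barron_fourierCoeff_tsum {A : Type} [NormedAddCommGroup A] [NormedSpace ℂ A]
    [CompleteSpace A] (a : ℤ → A) (ha : Summable fun n => ‖a n‖) (n : ℤ) :
    fourierCoeff (fun x : AddCircle (1:ℝ) => ∑' m : ℤ, fourier m x • a m) n = a n := by
  have hnorm : ∀ (j : ℤ) (x : AddCircle (1:ℝ)), ‖fourier j x‖ = 1 :=
    fun j x => Circle.norm_coe _
  have hGint : ∀ m : ℤ, Integrable
      (fun x : AddCircle (1:ℝ) => fourier (-n) x • (fourier m x • a m)) haarAddCircle := by
    intro m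
    exact (((fourier (-n)).continuous.smul
      ((fourier m).continuous.smul continuous_const))).integrable_of_hasCompactSupport
      (isClosed_tsupport _).isCompact
  have hGnorm : ∀ (m : ℤ), (fun x : AddCircle (1:ℝ) =>
      ‖fourier (-n) x • (fourier m x • a m)‖) = fun _ => ‖a m‖ := by
    intro m
    funext x
    rw [norm_smul, norm_smul, hnorm, hnorm, one_mul, one_mul]
  have hsump : ∀ x : AddCircle (1:ℝ), Summable (fun m : ℤ => fourier m x • a m) := by
    intro x
    refine Summable.of_norm ?_
    simpa only [norm_smul, hnorm, one_mul] using ha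
  have key : ∑' m : ℤ, ∫ x : AddCircle (1:ℝ),
        fourier (-n) x • (fourier m x • a m) ∂haarAddCircle
      = ∫ x : AddCircle (1:ℝ),
        (∑' m : ℤ, fourier (-n) x • (fourier m x • a m)) ∂haarAddCircle := by
    refine integral_tsum_of_summable_integral_norm hGint ?_
    simp_rw [hGnorm, integral_const, probReal_univ, one_smul]
    exact ha
  have hfc : fourierCoeff (fun x : AddCircle (1:ℝ) => ∑' m : ℤ, fourier m x • a m) n
      = ∑' m : ℤ, fourierCoeff (fun x : AddCircle (1:ℝ) => fourier m x • a m) n := by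
    unfold fourierCoeff
    simp only []
    have h1 : ∀ t : AddCircle (1:ℝ), fourier (-n) t • ∑' m : ℤ, fourier m t • a m
        = ∑' m : ℤ, fourier (-n) t • (fourier m t • a m) :=
      fun t => (Summable.tsum_const_smul (fourier (-n) t) (hsump t)).symm
    simp_rw [h1]
    exact key.symm
  rw [hfc]
  simp_rw [barron_fc_fourier_smul]
  rw [tsum_eq_single n (fun m hm => by simp [hm])]
  simp

theorem barron_complete
    {A : Type} [NormedAddCommGroup A] [NormedSpace ℂ A] [CompleteSpace A]
    (γ : ℤ → ℝ) (hγ : ∀ n, 0 < γ n) (s : ℝ) (hs : 0 ≤ s)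
    (f : ℕ → AddCircle (1 : ℝ) → A)
    (hint : ∀ k, Integrable (f k) haarAddCircle)
    (hsum : ∀ k, Summable fun n : ℤ => (1 + γ n ^ 2) ^ (s / 2) * ‖fourierCoeff (f k) n‖)
    (hcauchy : ∀ ε > 0, ∃ N : ℕ, ∀ m ≥ N, ∀ k ≥ N,
      (∑' n : ℤ, (1 + γ n ^ 2) ^ (s / 2) *
        ‖fourierCoeff (f m) n - fourierCoeff (f k) n‖) < ε) :
    ∃ g : AddCircle (1 : ℝ) → A, Continuous g ∧
      (Summable fun n : ℤ => (1 + γ n ^ 2) ^ (s / 2) * ‖fourierCoeff g n‖) ∧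
      Tendsto (fun k : ℕ => ∑' n : ℤ, (1 + γ n ^ 2) ^ (s / 2) *
        ‖fourierCoeff (f k) n - fourierCoeff g n‖) atTop (nhds 0) := by
  set w : ℤ → ℝ := fun n => (1 + γ n ^ 2) ^ (s / 2) with hw
  set c : ℕ → ℤ → A := fun k n => fourierCoeff (f k) n with hc
  have hw1 : ∀ n, 1 ≤ w n := by
    intro n
    have h1 : (1:ℝ) ≤ 1 + γ n ^ 2 := by nlinarith [sq_nonneg (γ n)]
    calc (1:ℝ) = 1 ^ (s / 2) := (Real.one_rpow _).symm
    _ ≤ (1 + γ n ^ 2) ^ (s / 2) := Real.rpow_le_rpow zero_le_one h1 (by linarith)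
  have hw0 : ∀ n, 0 ≤ w n := fun n => zero_le_one.trans (hw1 n)
  have hdiff : ∀ m k, Summable (fun n => w n * ‖c m n - c k n‖) := by
    intro m k
    refine Summable.of_nonneg_of_le (fun n => by positivity) (fun n => ?_)
      ((hsum m).add (hsum k))
    have := norm_sub_le (c m n) (c k n)
    calc w n * ‖c m n - c k n‖ ≤ w n * (‖c m n‖ + ‖c k n‖) := by
          have := hw0 n; nlinarith
    _ = w n * ‖c m n‖ + w n * ‖c k n‖ := by ring
  have ha_ex : ∀ n, ∃ l : A, Tendsto (fun k => c k n) atTop (nhds l) := by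
    intro n
    apply cauchySeq_tendsto_of_complete
    rw [Metric.cauchySeq_iff]
    intro ε hε
    obtain ⟨N, hN⟩ := hcauchy ε hε
    refine ⟨N, fun m hm k hk => ?_⟩
    rw [dist_eq_norm]
    calc ‖c m n - c k n‖ ≤ w n * ‖c m n - c k n‖ :=
          le_mul_of_one_le_left (norm_nonneg _) (hw1 n)
    _ ≤ ∑' j, w j * ‖c m j - c k j‖ :=
          Summable.le_tsum (hdiff m k) n (fun j _ => by positivity)
    _ < ε := hN m hm k hk
  choose a ha using ha_ex
  have key : ∀ ε > 0, ∃ N : ℕ, ∀ k ≥ N,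
      Summable (fun n => w n * ‖c k n - a n‖) ∧
      (∑' n, w n * ‖c k n - a n‖) ≤ ε := by
    intro ε hε
    obtain ⟨N, hN⟩ := hcauchy ε hε
    refine ⟨N, fun k hk => ?_⟩
    have hb : ∀ F : Finset ℤ, ∑ n ∈ F, w n * ‖c k n - a n‖ ≤ ε := by
      intro F
      have htend : Tendsto (fun m => ∑ n ∈ F, w n * ‖c k n - c m n‖) atTop
          (nhds (∑ n ∈ F, w n * ‖c k n - a n‖)) := by
        refine tendsto_finset_sum _ fun n _ => ?_
        exact ((tendsto_const_nhds.sub (ha n)).norm).const_mul _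
      refine le_of_tendsto htend (eventually_atTop.2 ⟨N, fun m hm => ?_⟩)
      calc ∑ n ∈ F, w n * ‖c k n - c m n‖ ≤ ∑' n, w n * ‖c k n - c m n‖ :=
            Summable.sum_le_tsum F (fun n _ => by positivity) (hdiff k m)
      _ ≤ ε := (hN k hk m hm).le
    have hsummable : Summable (fun n => w n * ‖c k n - a n‖) :=
      summable_of_sum_le (fun n => by positivity) hb
    exact ⟨hsummable, Summable.tsum_le_of_sum_le hsummable hb⟩
  obtain ⟨N₀, hN₀⟩ := key 1 one_pos
  obtain ⟨hS0, -⟩ := hN₀ N₀ le_rfl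
  have hA : Summable (fun n => w n * ‖a n‖) := by
    refine Summable.of_nonneg_of_le (fun n => by positivity) (fun n => ?_)
      (hS0.add (hsum N₀))
    have h1 : ‖a n‖ ≤ ‖c N₀ n - a n‖ + ‖c N₀ n‖ := by
      have h2 : a n = c N₀ n - (c N₀ n - a n) := by abel
      calc ‖a n‖ = ‖c N₀ n - (c N₀ n - a n)‖ := by rw [← h2]
      _ ≤ ‖c N₀ n‖ + ‖c N₀ n - a n‖ := norm_sub_le _ _
      _ = ‖c N₀ n - a n‖ + ‖c N₀ n‖ := by ring
    have := hw0 n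
    calc w n * ‖a n‖ ≤ w n * (‖c N₀ n - a n‖ + ‖c N₀ n‖) := by nlinarith
    _ = w n * ‖c N₀ n - a n‖ + w n * ‖c N₀ n‖ := by ring
  have hA' : Summable (fun n => ‖a n‖) :=
    Summable.of_nonneg_of_le (fun n => norm_nonneg _)
      (fun n => le_mul_of_one_le_left (norm_nonneg _) (hw1 n)) hA
  refine ⟨fun x => ∑' m : ℤ, fourier m x • a m, ?_, ?_, ?_⟩
  · refine continuous_tsum (fun m => (fourier m).continuous.smul continuous_const) hA'
      (fun m x => ?_)
    rw [norm_smul]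
    have : ‖fourier m x‖ = 1 := Circle.norm_coe _
    rw [this, one_mul]
  · have heq : ∀ n, fourierCoeff (fun x : AddCircle (1:ℝ) => ∑' m : ℤ, fourier m x • a m) n
        = a n := barron_fourierCoeff_tsum a hA'
    simp_rw [heq]
    exact hA
  · have heq : ∀ n, fourierCoeff (fun x : AddCircle (1:ℝ) => ∑' m : ℤ, fourier m x • a m) n
        = a n := barron_fourierCoeff_tsum a hA'
    simp_rw [heq]
    rw [Metric.tendsto_atTop]
    intro ε hε
    obtain ⟨N, hN⟩ := key (ε / 2) (by linarith)
    refine ⟨N, fun k hk => ?_⟩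
    obtain ⟨hsk, hle⟩ := hN k hk
    rw [Real.dist_eq, sub_zero, abs_of_nonneg (tsum_nonneg (fun n => by positivity))]
    calc (∑' n, w n * ‖c k n - a n‖) ≤ ε / 2 := hle
    _ < ε := by linarith
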